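/- (Proposition C.2.) Define ψ_E^c(λ) = (−log(1 − cλ) − cλ)/c² for c > 0, let m̂_i = (π(I_i)/q_i(I_i)) f(I_i) + Σ_{j=1}^{i−1} π(I_j) f(I_j), μ̂_t = (Σ_{i=1}^t m̂_i)/t (with μ̂_0 a fixed positive constant), and let (λ_t), (c_t) be predictable with c_t ≥ μ̂_{t−1} > 0 and λ_t ∈ [0, 1/c_t). Then the empirical-Bernstein process M_t^{EB}(m*) = exp(Σ_{i=1}^t λ_i(Z_i − μ_i(m*)) − (Z_i − μ̂_{i−1})² ψ_E^{c_i}(λ_i)) is a nonnegative supermartingale; moreover, the mirrored process M'_t^{EB}(m*), defined identically but with f replaced by 1−f (so Z̃_t = (π(I_t)/q_t(I_t))(1 − f(I_t)), the target 1 − m*, and the analogous running mean μ̃_{t−1}), is also a nonnegative supermartingale. -/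

import Mathlib

open MeasureTheory Finset

namespace RLFA

variable {Ω : Type*}

/-- `remaining I t ω` is the set `N_t = {1,…,N} \ {I_1, …, I_{t-1}}` of indices not yet
sampled before time `t`. -/
def remaining {N : ℕ} (I : ℕ → Ω → Fin N) (t : ℕ) (ω : Ω) : Finset (Fin N) :=
  Finset.univ \ (Finset.Icc 1 (t - 1)).image fun j => I j ω

/-- The filtration `F_t = σ(I_1, …, I_t)`. -/
def filt {N : ℕ} (I : ℕ → Ω → Fin N) (t : ℕ) : MeasurableSpace Ω :=
  ⨆ j ∈ Finset.Icc 1 t, MeasurableSpace.comap (I j) ⊤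

/-- The importance-weighted observation `Z_t = f(I_t) · π(I_t) / q_t(I_t)`. -/
noncomputable def Zt {N : ℕ} (π f : Fin N → ℝ) (q : ℕ → Ω → Fin N → ℝ)
    (I : ℕ → Ω → Fin N) (t : ℕ) (ω : Ω) : ℝ :=
  f (I t ω) * (π (I t ω) / q t ω (I t ω))

/-- `μ_t(m) = m − Σ_{j=1}^{t−1} π(I_j) f(I_j)`. -/
def muT {N : ℕ} (π f : Fin N → ℝ) (I : ℕ → Ω → Fin N) (m : ℝ) (t : ℕ) (ω : Ω) : ℝ :=
  m - ∑ j ∈ Finset.Icc 1 (t - 1), π (I j ω) * f (I j ω)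

/-- The empirical-Bernstein CGF-like function `ψ_E^c(λ) = (−log(1 − cλ) − cλ)/c²`. -/
noncomputable def psiE (c lam : ℝ) : ℝ :=
  (-Real.log (1 - c * lam) - c * lam) / c ^ 2

/-- `m̂_i = (π(I_i)/q_i(I_i)) f(I_i) + Σ_{j=1}^{i−1} π(I_j) f(I_j)`. -/
noncomputable def mhat {N : ℕ} (π f : Fin N → ℝ) (q : ℕ → Ω → Fin N → ℝ)
    (I : ℕ → Ω → Fin N) (t : ℕ) (ω : Ω) : ℝ :=
  π (I t ω) / q t ω (I t ω) * f (I t ω) +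
    ∑ j ∈ Finset.Icc 1 (t - 1), π (I j ω) * f (I j ω)

/-- The running mean `μ̂_t = (Σ_{i=1}^t m̂_i)/t`, with `μ̂_0` a fixed constant `μ0`. -/
noncomputable def muhatP {N : ℕ} (μ0 : ℝ) (π f : Fin N → ℝ) (q : ℕ → Ω → Fin N → ℝ)
    (I : ℕ → Ω → Fin N) (t : ℕ) (ω : Ω) : ℝ :=
  if t = 0 then μ0 else (∑ i ∈ Finset.Icc 1 t, mhat π f q I i ω) / t

/-- The empirical-Bernstein process
`M_t^{EB}(m) = exp(Σ_{i=1}^t λ_i(Z_i − μ_i(m)) − (Z_i − μ̂_{i−1})² ψ_E^{c_i}(λ_i))`. -/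
noncomputable def ebM {N : ℕ} (μ0 : ℝ) (π f : Fin N → ℝ) (q : ℕ → Ω → Fin N → ℝ)
    (I : ℕ → Ω → Fin N) (lam c : ℕ → Ω → ℝ) (m : ℝ) (t : ℕ) (ω : Ω) : ℝ :=
  Real.exp (∑ i ∈ Finset.Icc 1 t,
    (lam i ω * (Zt π f q I i ω - muT π f I m i ω) -
      (Zt π f q I i ω - muhatP μ0 π f q I (i - 1) ω) ^ 2 * psiE (c i ω) (lam i ω)))

section Meas

variable {N : ℕ} {I : ℕ → Ω → Fin N}

lemma filt_mono {s t : ℕ} (h : s ≤ t) : filt I s ≤ filt I t := by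
  apply iSup₂_le
  intro j hj
  exact le_iSup₂ (f := fun j (_ : j ∈ Finset.Icc 1 t) => MeasurableSpace.comap (I j) ⊤) j
    (Finset.mem_Icc.2 ⟨(Finset.mem_Icc.1 hj).1, le_trans (Finset.mem_Icc.1 hj).2 h⟩)

lemma meas_I {j t : ℕ} (h1 : 1 ≤ j) (h2 : j ≤ t) : Measurable[filt I t] (I j) := by
  rw [measurable_iff_comap_le]
  exact le_iSup₂ (f := fun j (_ : j ∈ Finset.Icc 1 t) => MeasurableSpace.comap (I j) ⊤) j
      (Finset.mem_Icc.2 ⟨h1, h2⟩)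

lemma comp_meas {m' : MeasurableSpace Ω} {G : Ω → Fin N → ℝ}
    (hG : ∀ i, Measurable[m'] (fun ω => G ω i)) {T : Ω → Fin N}
    (hT : Measurable[m'] T) : Measurable[m'] (fun ω => G ω (T ω)) := by
  have heq : (fun ω => G ω (T ω)) = fun ω => ∑ i : Fin N, if T ω = i then G ω i else 0 := by
    funext ω
    rw [Finset.sum_ite_eq Finset.univ (T ω) (fun i => G ω i)]
    simp
  rw [heq]
  refine Finset.measurable_sum _ fun i _ => Measurable.ite ?_ (hG i) measurable_const
  exact hT (MeasurableSet.singleton i)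

variable {π f : Fin N → ℝ} {q : ℕ → Ω → Fin N → ℝ}
variable (hq_meas : ∀ t, 1 ≤ t → t ≤ N → ∀ i,
      StronglyMeasurable[filt I (t - 1)] fun ω => q t ω i)

include hq_meas

lemma meas_Zt {t : ℕ} (h1 : 1 ≤ t) (h2 : t ≤ N) :
    Measurable[filt I t] (Zt π f q I t) := by
  apply comp_meas (G := fun ω i => f i * (π i / q t ω i)) _ (meas_I h1 le_rfl)
  intro i
  exact measurable_const.mul (measurable_const.div
    (((hq_meas t h1 h2 i).measurable).mono (filt_mono (Nat.sub_le t 1)) le_rfl))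

omit hq_meas in
lemma meas_sumPF {s t : ℕ} (hst : s ≤ t) :
    Measurable[filt I t] (fun ω => ∑ j ∈ Finset.Icc 1 s, π (I j ω) * f (I j ω)) := by
  apply Finset.measurable_sum
  intro j hj
  obtain ⟨hj1, hj2⟩ := Finset.mem_Icc.1 hj
  exact (measurable_of_finite (fun i => π i * f i)).comp (meas_I hj1 (hj2.trans hst))

omit hq_meas in
lemma meas_muT {m : ℝ} {t : ℕ} :
    Measurable[filt I (t - 1)] (muT π f I m t) :=
  measurable_const.sub (meas_sumPF le_rfl)

lemma meas_mhat {t : ℕ} (h1 : 1 ≤ t) (h2 : t ≤ N) :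
    Measurable[filt I t] (mhat π f q I t) := by
  apply Measurable.add
  · apply comp_meas (G := fun ω i => π i / q t ω i * f i) _ (meas_I h1 le_rfl)
    intro i
    exact (measurable_const.div
      (((hq_meas t h1 h2 i).measurable).mono (filt_mono (Nat.sub_le t 1)) le_rfl)).mul
      measurable_const
  · exact meas_sumPF (Nat.sub_le t 1)

lemma meas_muhatP {μ0 : ℝ} {s : ℕ} (hs : s ≤ N) :
    Measurable[filt I s] (muhatP μ0 π f q I s) := by
  rcases Nat.eq_zero_or_pos s with rfl | hpos
  · have : muhatP μ0 π f q I 0 = fun _ => μ0 := by funext ω; simp [muhatP]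
    rw [this]; exact measurable_const
  · have : muhatP μ0 π f q I s =
        fun ω => (∑ i ∈ Finset.Icc 1 s, mhat π f q I i ω) / (s : ℝ) := by
      funext ω; simp [muhatP, hpos.ne']
    rw [this]
    apply Measurable.div _ measurable_const
    apply Finset.measurable_sum
    intro i hi
    obtain ⟨hi1, hi2⟩ := Finset.mem_Icc.1 hi
    exact (meas_mhat hq_meas hi1 (hi2.trans hs)).mono (filt_mono hi2) le_rfl

lemma meas_ebM {μ0 m : ℝ} {lam c : ℕ → Ω → ℝ}
    (hlam_meas : ∀ t, 1 ≤ t → t ≤ N → StronglyMeasurable[filt I (t - 1)] (lam t))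
    (hc_meas : ∀ t, 1 ≤ t → t ≤ N → StronglyMeasurable[filt I (t - 1)] (c t))
    {t : ℕ} (ht : t ≤ N) :
    Measurable[filt I t] (ebM μ0 π f q I lam c m t) := by
  apply Measurable.exp
  apply Finset.measurable_sum
  intro i hi
  obtain ⟨hi1, hi2⟩ := Finset.mem_Icc.1 hi
  have hiN := hi2.trans ht
  have hmono : filt I (i - 1) ≤ filt I t := filt_mono ((Nat.sub_le i 1).trans hi2)
  have hlm : Measurable[filt I t] (lam i) :=
    ((hlam_meas i hi1 hiN).measurable).mono hmono le_rfl
  have hcm : Measurable[filt I t] (c i) :=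
    ((hc_meas i hi1 hiN).measurable).mono hmono le_rfl
  have hZ : Measurable[filt I t] (Zt π f q I i) :=
    (meas_Zt hq_meas hi1 hiN).mono (filt_mono hi2) le_rfl
  have hmu : Measurable[filt I t] (muT π f I m i) :=
    (meas_muT (m := m) (t := i)).mono hmono le_rfl
  have hmh : Measurable[filt I t] (muhatP μ0 π f q I (i - 1)) :=
    (meas_muhatP hq_meas ((Nat.sub_le i 1).trans hiN)).mono hmono le_rfl
  have hpsi : Measurable[filt I t] (fun ω => psiE (c i ω) (lam i ω)) := by
    unfold psiE
    apply Measurable.div _ (hcm.pow_const 2)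
    exact ((measurable_const.sub (hcm.mul hlm)).log).neg.sub (hcm.mul hlm)
  exact (hlm.mul (hZ.sub hmu)).sub (((hZ.sub hmh).pow_const 2).mul hpsi)

end Meas

section Analysis
open intervalIntegral in
lemma int_repr {v : ℝ} (hv : -1 < v) :
    v - Real.log (1 + v) = ∫ s in (0:ℝ)..1, v^2 * s / (1 + s*v) := by
  have hpos : ∀ s ∈ Set.uIcc (0:ℝ) 1, 0 < 1 + s*v := by
    intro s hs
    rw [Set.uIcc_of_le (by norm_num)] at hs
    rcases le_or_gt 0 v with h | h
    · nlinarith [hs.1]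
    · nlinarith [hs.2]
  have key : ∀ s ∈ Set.uIcc (0:ℝ) 1,
      HasDerivAt (fun t => t*v - Real.log (1 + t*v)) (v^2 * s / (1 + s*v)) s := by
    intro s hs
    have h1 : HasDerivAt (fun t : ℝ => t*v) v s := by
      simpa using (hasDerivAt_id s).mul_const v
    have h2 : HasDerivAt (fun t : ℝ => 1 + t*v) v s := by
      simpa using h1.const_add 1
    have h3 : HasDerivAt (fun t => Real.log (1 + t*v)) (v / (1 + s*v)) s :=
      h2.log (hpos s hs).ne'
    have := h1.sub h3
    refine this.congr_deriv ?_
    rw [eq_div_iff (hpos s hs).ne', sub_mul, div_mul_cancel₀ _ (hpos s hs).ne']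
    ring
  have hcont : ContinuousOn (fun s => v^2 * s / (1 + s*v)) (Set.uIcc 0 1) := by
    apply ContinuousOn.div (by fun_prop) (by fun_prop)
    intro s hs; exact (hpos s hs).ne'
  have := intervalIntegral.integral_eq_sub_of_hasDerivAt key (hcont.intervalIntegrable)
  rw [this]; simp

lemma h_mono {w v : ℝ} (hw : -1 < w) (hwv : w ≤ v) :
    w^2 * (v - Real.log (1 + v)) ≤ v^2 * (w - Real.log (1 + w)) := by
  have hv : -1 < v := lt_of_lt_of_le hw hwv
  have hposw : ∀ s ∈ Set.uIcc (0:ℝ) 1, 0 < 1 + s*w := by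
    intro s hs; rw [Set.uIcc_of_le (by norm_num)] at hs
    rcases le_or_gt 0 w with h | h
    · nlinarith [hs.1]
    · nlinarith [hs.2]
  have hposv : ∀ s ∈ Set.uIcc (0:ℝ) 1, 0 < 1 + s*v := by
    intro s hs; rw [Set.uIcc_of_le (by norm_num)] at hs
    rcases le_or_gt 0 v with h | h
    · nlinarith [hs.1]
    · nlinarith [hs.2]
  rw [int_repr hv, int_repr hw, ← intervalIntegral.integral_const_mul,
    ← intervalIntegral.integral_const_mul]
  apply intervalIntegral.integral_mono_on (by norm_num)
  · apply ContinuousOn.intervalIntegrable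
    apply ContinuousOn.mul continuousOn_const
    exact ContinuousOn.div (by fun_prop) (by fun_prop) (fun s hs => (hposv s hs).ne')
  · apply ContinuousOn.intervalIntegrable
    apply ContinuousOn.mul continuousOn_const
    exact ContinuousOn.div (by fun_prop) (by fun_prop) (fun s hs => (hposw s hs).ne')
  · intro s hs
    have h1 : 0 < 1 + s*w := hposw s (by rw [Set.uIcc_of_le (by norm_num)]; exact hs)
    have h2 : 0 < 1 + s*v := hposv s (by rw [Set.uIcc_of_le (by norm_num)]; exact hs)
    have h3 : 1 + s*w ≤ 1 + s*v := by nlinarith [hs.1]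
    have h4 : s / (1 + s*v) ≤ s / (1 + s*w) :=
      div_le_div_of_nonneg_left hs.1 h1 h3 |>.trans_eq rfl
    calc w^2 * (v^2 * s / (1 + s*v)) = (w^2 * v^2) * (s / (1+s*v)) := by ring
    _ ≤ (w^2 * v^2) * (s / (1+s*w)) := by
        apply mul_le_mul_of_nonneg_left h4 (by positivity)
    _ = v^2 * (w^2 * s / (1 + s*w)) := by ring

lemma fan {c l x : ℝ} (hc : 0 < c) (hl : 0 ≤ l) (hlc : c * l < 1) (hx : -c ≤ x) :
    Real.exp (l * x - x^2 * psiE c l) ≤ 1 + l * x := by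
  have hpos : 0 < 1 + l * x := by nlinarith
  rcases eq_or_lt_of_le hl with h | h
  · simp [psiE, ← h]
  · have hw : (-1 : ℝ) < -(l*c) := by nlinarith
    have hwv : -(l*c) ≤ l*x := by nlinarith
    have key := h_mono hw hwv
    have hlog : l * x - x^2 * psiE c l ≤ Real.log (1 + l * x) := by
      have hc2 : (0:ℝ) < c^2 := by positivity
      have hl2 : (0:ℝ) < l^2 := by positivity
      rw [psiE]
      have h1mlc : 1 + -(l*c) = 1 - c*l := by ring
      rw [h1mlc] at key
      -- key : (-(l*c))^2 * (l*x - log (1+l*x)) ≤ (l*x)^2 * (-(l*c) - log (1-c*l))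
      have key2 : c^2*(l*x - Real.log (1+l*x)) ≤ x^2*(-Real.log (1-c*l) - c*l) := by
        nlinarith [key, hl2, mul_pos hl2 hc2]
      have h5 : l*x - Real.log (1+l*x) ≤ x^2 * ((-Real.log (1-c*l) - c*l)/c^2) := by
        rw [mul_div_assoc', le_div_iff₀ hc2]; linarith
      linarith
    calc Real.exp (l * x - x^2 * psiE c l) ≤ Real.exp (Real.log (1 + l*x)) :=
          Real.exp_le_exp.2 hlog
    _ = 1 + l * x := Real.exp_log hpos

end Analysis


lemma pointwise_sum_le {N : ℕ} (R : Finset (Fin N)) (qv Zf : Fin N → ℝ)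
    (l c₀ mh mt : ℝ)
    (hq_pos : ∀ i ∈ R, 0 < qv i) (hqsum : ∑ i ∈ R, qv i = 1)
    (hZsum : ∑ i ∈ R, qv i * Zf i = mt) (hZ0 : ∀ i ∈ R, 0 ≤ Zf i)
    (hmh : 0 < mh) (hmhc : mh ≤ c₀) (hl0 : 0 ≤ l) (hl1 : l < 1 / c₀) :
    ∑ i ∈ R, qv i * Real.exp (l * (Zf i - mt) - (Zf i - mh) ^ 2 * psiE c₀ l) ≤ 1 := by
  have hc₀ : 0 < c₀ := lt_of_lt_of_le hmh hmhc
  have hcl : c₀ * l < 1 := by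
    rw [lt_div_iff₀ hc₀] at hl1; linarith
  set K := Real.exp (l * (mh - mt)) with hK
  have hterm : ∀ i ∈ R, qv i * Real.exp (l * (Zf i - mt) - (Zf i - mh) ^ 2 * psiE c₀ l)
      ≤ qv i * ((1 + l * (Zf i - mh)) * K) := by
    intro i hi
    have hx : -c₀ ≤ Zf i - mh := by
      have := hZ0 i hi; linarith
    have hfan := fan hc₀ hl0 hcl hx
    have hdec : l * (Zf i - mt) - (Zf i - mh) ^ 2 * psiE c₀ l
        = (l * (Zf i - mh) - (Zf i - mh) ^ 2 * psiE c₀ l) + l * (mh - mt) := by ring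
    rw [hdec, Real.exp_add]
    exact mul_le_mul_of_nonneg_left
      (mul_le_mul_of_nonneg_right hfan (Real.exp_pos _).le) (hq_pos i hi).le
  calc ∑ i ∈ R, qv i * Real.exp (l * (Zf i - mt) - (Zf i - mh) ^ 2 * psiE c₀ l)
      ≤ ∑ i ∈ R, qv i * ((1 + l * (Zf i - mh)) * K) := Finset.sum_le_sum hterm
    _ = (1 + l * (mt - mh)) * K := by
        have hee : ∀ i ∈ R, qv i * ((1 + l * (Zf i - mh)) * K)
            = (qv i + l * (qv i * Zf i) - (l * mh) * qv i) * K := by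
          intro i _; ring
        rw [Finset.sum_congr rfl hee, ← Finset.sum_mul]
        congr 1
        rw [Finset.sum_sub_distrib, Finset.sum_add_distrib, ← Finset.mul_sum,
          ← Finset.mul_sum, hqsum, hZsum]
        ring
    _ ≤ 1 := by
        have h1 : 1 + l * (mt - mh) ≤ Real.exp (l * (mt - mh)) := by
          linarith [Real.add_one_le_exp (l * (mt - mh))]
        have h2 : (1 + l * (mt - mh)) * K ≤ Real.exp (l * (mt - mh)) * K :=
          mul_le_mul_of_nonneg_right h1 (Real.exp_pos _).le
        have h3 : Real.exp (l * (mt - mh)) * K = 1 := by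
          rw [hK, ← Real.exp_add, show l * (mt - mh) + l * (mh - mt) = 0 by ring,
            Real.exp_zero]
        linarith

lemma main_super [m0 : MeasurableSpace Ω] (μ : Measure Ω) [IsProbabilityMeasure μ]
    {N : ℕ}
    (π f : Fin N → ℝ)
    (hπ : ∀ i, π i ∈ Set.Ioc (0 : ℝ) 1)
    (hf0 : ∀ i, 0 ≤ f i)
    (I : ℕ → Ω → Fin N) (hI : ∀ t, Measurable (I t))
    (q : ℕ → Ω → Fin N → ℝ)
    (hq_meas : ∀ t, 1 ≤ t → t ≤ N → ∀ i,
      StronglyMeasurable[filt I (t - 1)] fun ω => q t ω i)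
    (hq_pos : ∀ t ω, 1 ≤ t → t ≤ N → ∀ i ∈ remaining I t ω, 0 < q t ω i)
    (hq_sum : ∀ t ω, 1 ≤ t → t ≤ N → ∑ i ∈ remaining I t ω, q t ω i = 1)
    (hWoR : ∀ t ω, 1 ≤ t → t ≤ N → I t ω ∈ remaining I t ω)
    (hcond : ∀ t, 1 ≤ t → t ≤ N → ∀ G : Ω → Fin N → ℝ,
      (∀ i, StronglyMeasurable[filt I (t - 1)] fun ω => G ω i) →
      μ[(fun ω => G ω (I t ω)) | filt I (t - 1)]
        =ᵐ[μ] fun ω => ∑ i ∈ remaining I t ω, q t ω i * G ω i)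
    (m : ℝ) (hm : m = ∑ i, π i * f i)
    (μ0 : ℝ)
    (lam c : ℕ → Ω → ℝ)
    (hlam_meas : ∀ t, 1 ≤ t → t ≤ N → StronglyMeasurable[filt I (t - 1)] (lam t))
    (hc_meas : ∀ t, 1 ≤ t → t ≤ N → StronglyMeasurable[filt I (t - 1)] (c t))
    (hc : ∀ t, 1 ≤ t → t ≤ N → ∀ᵐ ω ∂μ,
      0 < muhatP μ0 π f q I (t - 1) ω ∧ muhatP μ0 π f q I (t - 1) ω ≤ c t ω)
    (hlam : ∀ t, 1 ≤ t → t ≤ N → ∀ᵐ ω ∂μ, 0 ≤ lam t ω ∧ lam t ω < 1 / c t ω) :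
    ((∀ ω, ebM μ0 π f q I lam c m 0 ω = 1) ∧
     (∀ t ω, 0 ≤ ebM μ0 π f q I lam c m t ω) ∧
     (∀ t, t ≤ N → StronglyMeasurable[filt I t] (ebM μ0 π f q I lam c m t)) ∧
     (∀ t, 1 ≤ t → t ≤ N →
       μ[ebM μ0 π f q I lam c m t | filt I (t - 1)]
         ≤ᵐ[μ] ebM μ0 π f q I lam c m (t - 1))) := by
  refine ⟨fun ω => by simp [ebM], fun t ω => (Real.exp_pos _).le,
    fun t ht => (meas_ebM hq_meas hlam_meas hc_meas ht).stronglyMeasurable, ?_⟩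
  intro t ht1 htN
  obtain ⟨s, rfl⟩ : ∃ s, t = s + 1 := ⟨t - 1, by omega⟩
  have hts : s + 1 - 1 = s := rfl
  set G : Ω → Fin N → ℝ := fun ω i =>
    ebM μ0 π f q I lam c m s ω *
      Real.exp (lam (s+1) ω * (f i * (π i / q (s+1) ω i) - muT π f I m (s+1) ω) -
        (f i * (π i / q (s+1) ω i) - muhatP μ0 π f q I s ω) ^ 2 *
          psiE (c (s+1) ω) (lam (s+1) ω)) with hG
  have hGmeas : ∀ i, StronglyMeasurable[filt I ((s+1) - 1)] fun ω => G ω i := by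
    intro i
    rw [hts]
    apply Measurable.stronglyMeasurable
    have hqi : Measurable[filt I s] (fun ω => q (s+1) ω i) := by
      have := (hq_meas (s+1) (by omega) htN i).measurable
      rwa [hts] at this
    have hlm : Measurable[filt I s] (lam (s+1)) := by
      have := (hlam_meas (s+1) (by omega) htN).measurable; rwa [hts] at this
    have hcm : Measurable[filt I s] (c (s+1)) := by
      have := (hc_meas (s+1) (by omega) htN).measurable; rwa [hts] at this
    have hE : Measurable[filt I s] (ebM μ0 π f q I lam c m s) :=
      meas_ebM hq_meas hlam_meas hc_meas (by omega)
    have hmu : Measurable[filt I s] (muT π f I m (s+1)) := by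
      have : Measurable[filt I ((s+1)-1)] (muT π f I m (s+1)) := meas_muT
      rwa [hts] at this
    have hmh : Measurable[filt I s] (muhatP μ0 π f q I s) :=
      meas_muhatP hq_meas (by omega)
    have hZi : Measurable[filt I s] (fun ω => f i * (π i / q (s+1) ω i)) :=
      measurable_const.mul (measurable_const.div hqi)
    have hpsi : Measurable[filt I s] (fun ω => psiE (c (s+1) ω) (lam (s+1) ω)) := by
      unfold psiE
      exact (((measurable_const.sub (hcm.mul hlm)).log).neg.sub (hcm.mul hlm)).div
        (hcm.pow_const 2)
    exact hE.mul ((((hlm.mul (hZi.sub hmu)).sub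
      (((hZi.sub hmh).pow_const 2).mul hpsi))).exp)
  have hGI : (fun ω => G ω (I (s+1) ω)) = ebM μ0 π f q I lam c m (s+1) := by
    funext ω
    rw [hG]
    show _ = Real.exp _
    rw [Finset.sum_Icc_succ_top (by omega : 1 ≤ s + 1), Real.exp_add]
    rfl
  have hce := hcond (s+1) (by omega) htN G hGmeas
  rw [hGI] at hce
  refine hce.le.trans ?_
  rw [hts]
  filter_upwards [hc (s+1) (by omega) htN, hlam (s+1) (by omega) htN] with ω hcω hlamω
  rw [hts] at hcω
  obtain ⟨hmh_pos, hmh_le⟩ := hcω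
  obtain ⟨hl0, hl1⟩ := hlamω
  have hqsum := hq_sum (s+1) ω (by omega) htN
  -- distinctness of past indices
  have hinj : ∀ a ∈ Finset.Icc 1 (s+1-1), ∀ b ∈ Finset.Icc 1 (s+1-1),
      I a ω = I b ω → a = b := by
    have key : ∀ a b, a ∈ Finset.Icc 1 s → b ∈ Finset.Icc 1 s → a < b → I a ω ≠ I b ω := by
      intro a b ha hb hab hEq
      obtain ⟨ha1, ha2⟩ := Finset.mem_Icc.1 ha
      obtain ⟨hb1, hb2⟩ := Finset.mem_Icc.1 hb
      have hwor := hWoR b ω hb1 (by omega)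
      rw [remaining, Finset.mem_sdiff] at hwor
      exact hwor.2 (Finset.mem_image.2 ⟨a, Finset.mem_Icc.2 ⟨ha1, by omega⟩, hEq⟩)
    intro a ha b hb hEq
    rw [hts] at ha hb
    rcases lt_trichotomy a b with h | h | h
    · exact absurd hEq (key a b ha hb h)
    · exact h
    · exact absurd hEq.symm (key b a hb ha h)
  have hsum_img : ∑ i ∈ (Finset.Icc 1 (s+1-1)).image (fun j => I j ω), π i * f i
      = ∑ j ∈ Finset.Icc 1 (s+1-1), π (I j ω) * f (I j ω) :=
    Finset.sum_image hinj
  have hZsum : ∑ i ∈ remaining I (s+1) ω,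
      q (s+1) ω i * (f i * (π i / q (s+1) ω i)) = muT π f I m (s+1) ω := by
    have h1 : ∀ i ∈ remaining I (s+1) ω,
        q (s+1) ω i * (f i * (π i / q (s+1) ω i)) = π i * f i := by
      intro i hi
      have hq0 : q (s+1) ω i ≠ 0 := (hq_pos (s+1) ω (by omega) htN i hi).ne'
      field_simp
    rw [Finset.sum_congr rfl h1]
    show ∑ i ∈ Finset.univ \ _, π i * f i = _
    rw [Finset.sum_sdiff_eq_sub (Finset.subset_univ _), hsum_img]
    rw [muT, hm]
  have hsum_le := pointwise_sum_le (remaining I (s+1) ω) (q (s+1) ω)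
    (fun i => f i * (π i / q (s+1) ω i)) (lam (s+1) ω) (c (s+1) ω)
    (muhatP μ0 π f q I s ω) (muT π f I m (s+1) ω)
    (fun i hi => hq_pos (s+1) ω (by omega) htN i hi) hqsum hZsum
    (fun i hi => mul_nonneg (hf0 i)
      (div_nonneg (hπ i).1.le (hq_pos (s+1) ω (by omega) htN i hi).le))
    hmh_pos hmh_le hl0 hl1
  calc ∑ i ∈ remaining I (s+1) ω, q (s+1) ω i * G ω i
      = ebM μ0 π f q I lam c m s ω * ∑ i ∈ remaining I (s+1) ω, q (s+1) ω i *
          Real.exp (lam (s+1) ω * (f i * (π i / q (s+1) ω i) - muT π f I m (s+1) ω) -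
            (f i * (π i / q (s+1) ω i) - muhatP μ0 π f q I s ω) ^ 2 *
              psiE (c (s+1) ω) (lam (s+1) ω)) := by
        rw [Finset.mul_sum]
        exact Finset.sum_congr rfl fun i _ => by rw [hG]; ring
    _ ≤ ebM μ0 π f q I lam c m s ω * 1 :=
        mul_le_mul_of_nonneg_left hsum_le (Real.exp_pos _).le
    _ = ebM μ0 π f q I lam c m s ω := mul_one _


/-- **Proposition C.2.** With `ψ_E^c(λ) = (−log(1−cλ)−cλ)/c²`, running mean
`μ̂_t` (with `μ̂_0` a fixed positive constant), and predictable `(λ_t), (c_t)` with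
`c_t ≥ μ̂_{t−1} > 0` and `λ_t ∈ [0, 1/c_t)`, the empirical-Bernstein process
`M_t^{EB}(m*) = exp(Σ_{i=1}^t λ_i(Z_i − μ_i(m*)) − (Z_i − μ̂_{i−1})² ψ_E^{c_i}(λ_i))` is a
nonnegative supermartingale; moreover the mirrored process `M'_t^{EB}(m*)`, defined
identically but with `f` replaced by `1 − f` (so `Z̃_t = (π(I_t)/q_t(I_t))(1 − f(I_t))`, the
target `1 − m*`, and the analogous running mean `μ̃_{t-1}`, with its own predictable
sequences `(λ'_t), (c'_t)` satisfying the analogous conditions), is also a nonnegative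
supermartingale. -/
theorem statement15
    [m0 : MeasurableSpace Ω] (μ : Measure Ω) [IsProbabilityMeasure μ]
    {N : ℕ} (hN : 1 ≤ N)
    (π f : Fin N → ℝ)
    (hπ : ∀ i, π i ∈ Set.Ioc (0 : ℝ) 1) (hπsum : ∑ i, π i = 1)
    (hf : ∀ i, f i ∈ Set.Icc (0 : ℝ) 1)
    (I : ℕ → Ω → Fin N) (hI : ∀ t, Measurable (I t))
    (q : ℕ → Ω → Fin N → ℝ)
    (hq_meas : ∀ t, 1 ≤ t → t ≤ N → ∀ i,
      StronglyMeasurable[filt I (t - 1)] fun ω => q t ω i)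
    (hq_pos : ∀ t ω, 1 ≤ t → t ≤ N → ∀ i ∈ remaining I t ω, 0 < q t ω i)
    (hq_sum : ∀ t ω, 1 ≤ t → t ≤ N → ∑ i ∈ remaining I t ω, q t ω i = 1)
    (hWoR : ∀ t ω, 1 ≤ t → t ≤ N → I t ω ∈ remaining I t ω)
    (hcond : ∀ t, 1 ≤ t → t ≤ N → ∀ G : Ω → Fin N → ℝ,
      (∀ i, StronglyMeasurable[filt I (t - 1)] fun ω => G ω i) →
      μ[(fun ω => G ω (I t ω)) | filt I (t - 1)]
        =ᵐ[μ] fun ω => ∑ i ∈ remaining I t ω, q t ω i * G ω i)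
    (mstar : ℝ) (hmstar : mstar = ∑ i, π i * f i)
    -- the lower process
    (μ0 : ℝ) (hμ0 : 0 < μ0)
    (lam c : ℕ → Ω → ℝ)
    (hlam_meas : ∀ t, 1 ≤ t → t ≤ N → StronglyMeasurable[filt I (t - 1)] (lam t))
    (hc_meas : ∀ t, 1 ≤ t → t ≤ N → StronglyMeasurable[filt I (t - 1)] (c t))
    (hc : ∀ t, 1 ≤ t → t ≤ N → ∀ᵐ ω ∂μ,
      0 < muhatP μ0 π f q I (t - 1) ω ∧ muhatP μ0 π f q I (t - 1) ω ≤ c t ω)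
    (hlam : ∀ t, 1 ≤ t → t ≤ N → ∀ᵐ ω ∂μ, 0 ≤ lam t ω ∧ lam t ω < 1 / c t ω)
    -- the mirrored process (with `f` replaced by `1 − f` and target `1 − m*`)
    (ν0 : ℝ) (hν0 : 0 < ν0)
    (lam' c' : ℕ → Ω → ℝ)
    (hlam'_meas : ∀ t, 1 ≤ t → t ≤ N → StronglyMeasurable[filt I (t - 1)] (lam' t))
    (hc'_meas : ∀ t, 1 ≤ t → t ≤ N → StronglyMeasurable[filt I (t - 1)] (c' t))
    (hc' : ∀ t, 1 ≤ t → t ≤ N → ∀ᵐ ω ∂μ,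
      0 < muhatP ν0 π (fun i => 1 - f i) q I (t - 1) ω ∧
        muhatP ν0 π (fun i => 1 - f i) q I (t - 1) ω ≤ c' t ω)
    (hlam' : ∀ t, 1 ≤ t → t ≤ N → ∀ᵐ ω ∂μ, 0 ≤ lam' t ω ∧ lam' t ω < 1 / c' t ω) :
    ((∀ ω, ebM μ0 π f q I lam c mstar 0 ω = 1) ∧
     (∀ t ω, 0 ≤ ebM μ0 π f q I lam c mstar t ω) ∧
     (∀ t, t ≤ N → StronglyMeasurable[filt I t] (ebM μ0 π f q I lam c mstar t)) ∧
     (∀ t, 1 ≤ t → t ≤ N →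
       μ[ebM μ0 π f q I lam c mstar t | filt I (t - 1)]
         ≤ᵐ[μ] ebM μ0 π f q I lam c mstar (t - 1))) ∧
    ((∀ ω, ebM ν0 π (fun i => 1 - f i) q I lam' c' (1 - mstar) 0 ω = 1) ∧
     (∀ t ω, 0 ≤ ebM ν0 π (fun i => 1 - f i) q I lam' c' (1 - mstar) t ω) ∧
     (∀ t, t ≤ N →
       StronglyMeasurable[filt I t] (ebM ν0 π (fun i => 1 - f i) q I lam' c' (1 - mstar) t)) ∧
     (∀ t, 1 ≤ t → t ≤ N →
       μ[ebM ν0 π (fun i => 1 - f i) q I lam' c' (1 - mstar) t | filt I (t - 1)]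
         ≤ᵐ[μ] ebM ν0 π (fun i => 1 - f i) q I lam' c' (1 - mstar) (t - 1))) := by
  constructor
  · exact main_super μ π f hπ (fun i => (hf i).1) I hI q hq_meas hq_pos hq_sum hWoR hcond
      mstar hmstar μ0 lam c hlam_meas hc_meas hc hlam
  · refine main_super μ π (fun i => 1 - f i) hπ (fun i => by simpa using (hf i).2) I hI q
      hq_meas hq_pos hq_sum hWoR hcond (1 - mstar) ?_ ν0 lam' c'
      hlam'_meas hc'_meas hc' hlam'
    have h2 : ∑ i, π i * (1 - f i) = (∑ i, π i) - ∑ i, π i * f i := by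
      rw [← Finset.sum_sub_distrib]
      exact Finset.sum_congr rfl fun i _ => by ring
    rw [h2, hπsum, hmstar]


end RLFA
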